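/- Let X be a locally compact Hausdorff zero-dimensional space having a base 𝓑 for its topology consisting of compact clopen sets which are pairwise homeomorphic. Then for every open set U ⊆ X and every point x ∈ U, the set { g(x) : g ∈ H(X) and g restricts to the identity on X \ U } is dense in U. -/

import Mathlib

open Set Topology TopologicalSpace

/-- The compact-open topology on the group of self-homeomorphisms of a space:
the topology induced from the compact-open topology on `C(X, X)`. -/
instance homeomorphCompactOpen (X : Type*) [TopologicalSpace X] :
    TopologicalSpace (X ≃ₜ X) :=
  TopologicalSpace.induced (fun h : X ≃ₜ X => (h : C(X, X))) ContinuousMap.compactOpen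

/-- The group of self-homeomorphisms of a space, under composition. -/
instance homeomorphGroup (X : Type*) [TopologicalSpace X] : Group (X ≃ₜ X) where
  mul f g := g.trans f
  one := Homeomorph.refl X
  inv := Homeomorph.symm
  mul_assoc _ _ _ := Homeomorph.ext fun _ => rfl
  one_mul _ := Homeomorph.ext fun _ => rfl
  mul_one _ := Homeomorph.ext fun _ => rfl
  inv_mul_cancel f := Homeomorph.ext fun x => f.symm_apply_apply x

/-- The weight of a topological space: the least cardinality of a base of its topology. -/
noncomputable def TopologicalSpace.weight (X : Type u) [TopologicalSpace X] : Cardinal.{u} :=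
  ⨅ B : {B : Set (Set X) // TopologicalSpace.IsTopologicalBasis B}, Cardinal.mk B.1

/-- A set is an Fσ-set if it is a countable union of closed sets. -/
def IsFsigma {X : Type*} [TopologicalSpace X] (s : Set X) : Prop :=
  ∃ F : ℕ → Set X, (∀ n, IsClosed (F n)) ∧ s = ⋃ n, F n

/-- An F-space (for normal spaces): disjoint open Fσ-sets have disjoint closures. -/
def IsFSpace (X : Type*) [TopologicalSpace X] : Prop :=
  ∀ U V : Set X, IsOpen U → IsOpen V → IsFsigma U → IsFsigma V → Disjoint U V →
    Disjoint (closure U) (closure V)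

/-- A Parovičenko space: a compact zero-dimensional F-space of weight `𝔠` in which
every nonempty Gδ-set has infinite interior. -/
structure IsParovicenko (X : Type u) [TopologicalSpace X] : Prop where
  compact : CompactSpace X
  t2 : T2Space X
  zeroDim : TopologicalSpace.IsTopologicalBasis {s : Set X | IsClopen s}
  fSpace : IsFSpace X
  weight_eq : TopologicalSpace.weight X = Cardinal.continuum
  gdelta_int : ∀ s : Set X, IsGδ s → s.Nonempty → (interior s).Infinite

/-- The Gδ-modification of a topology: the topology generated by the Gδ-sets. -/
def gdeltaMod {X : Type*} (t : TopologicalSpace X) : TopologicalSpace X :=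
  TopologicalSpace.generateFrom {s : Set X | @IsGδ X t s}

/-- The Čech–Stone remainder `βα \ α` of a space `α`. -/
abbrev CechStoneRemainder (α : Type u) [TopologicalSpace α] : Type u :=
  {p : StoneCech α // p ∉ Set.range (stoneCechUnit : α → StoneCech α)}

/-- `ω* = βω \ ω`, the Čech–Stone remainder of the countable discrete space `ω`. -/
abbrev OmegaStar : Type := CechStoneRemainder ℕ


section SwapHomeo

variable {X : Type*} [TopologicalSpace X]

attribute [local instance] Classical.propDecidable

/-- Given disjoint clopen sets `B`, `C` and a homeomorphism `e : B ≃ₜ C`, the map swapping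
`B` and `C` via `e` and fixing everything else. -/
noncomputable def swapFun {B C : Set X} (e : ↥B ≃ₜ ↥C) (z : X) : X :=
  if h : z ∈ B then (e ⟨z, h⟩ : X) else if h : z ∈ C then (e.symm ⟨z, h⟩ : X) else z

lemma swapFun_involutive {B C : Set X} (hd : Disjoint B C) (e : ↥B ≃ₜ ↥C) :
    Function.Involutive (swapFun e) := by
  intro z
  unfold swapFun
  by_cases hzB : z ∈ B
  · have h1 : (e ⟨z, hzB⟩ : X) ∈ C := (e ⟨z, hzB⟩).2
    have h2 : (e ⟨z, hzB⟩ : X) ∉ B := fun h => hd.ne_of_mem h h1 rfl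
    simp only [dif_pos hzB, dif_neg h2, dif_pos h1]
    have : (⟨(e ⟨z, hzB⟩ : X), h1⟩ : C) = e ⟨z, hzB⟩ := rfl
    rw [this, e.symm_apply_apply]
  · by_cases hzC : z ∈ C
    · have h1 : (e.symm ⟨z, hzC⟩ : X) ∈ B := (e.symm ⟨z, hzC⟩).2
      simp only [dif_neg hzB, dif_pos hzC, dif_pos h1]
      have : (⟨(e.symm ⟨z, hzC⟩ : X), h1⟩ : B) = e.symm ⟨z, hzC⟩ := rfl
      rw [this, e.apply_symm_apply]
    · simp only [dif_neg hzB, dif_neg hzC]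

lemma swapFun_continuous {B C : Set X} (hB : IsClopen B) (hC : IsClopen C)
    (hd : Disjoint B C) (e : ↥B ≃ₜ ↥C) : Continuous (swapFun e) := by
  rw [continuous_iff_continuousAt]
  intro z
  by_cases hzB : z ∈ B
  · have hon : ContinuousOn (swapFun e) B := by
      rw [continuousOn_iff_continuous_restrict]
      have : B.domRestrict (swapFun e) = fun w : B => (e w : X) := by
        funext w
        simp only [Set.domRestrict_apply, swapFun, dif_pos w.2]
      rw [this]
      exact continuous_subtype_val.comp e.continuous
    exact hon.continuousAt (hB.isOpen.mem_nhds hzB)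
  · by_cases hzC : z ∈ C
    · have hon : ContinuousOn (swapFun e) C := by
        rw [continuousOn_iff_continuous_restrict]
        have : C.domRestrict (swapFun e) = fun w : C => (e.symm w : X) := by
          funext w
          have hwB : (w : X) ∉ B := fun h => hd.ne_of_mem h w.2 rfl
          simp only [Set.domRestrict_apply, swapFun, dif_neg hwB, dif_pos w.2]
        rw [this]
        exact continuous_subtype_val.comp e.symm.continuous
      exact hon.continuousAt (hC.isOpen.mem_nhds hzC)
    · have hon : ContinuousOn (swapFun e) (B ∪ C)ᶜ := by
        rw [continuousOn_iff_continuous_restrict]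
        have : (B ∪ C)ᶜ.domRestrict (swapFun e) = fun w : ↥(B ∪ C)ᶜ => (w : X) := by
          funext w
          have := w.2
          simp only [Set.mem_compl_iff, Set.mem_union, not_or] at this
          simp only [Set.domRestrict_apply, swapFun, dif_neg this.1, dif_neg this.2]
        rw [this]
        exact continuous_subtype_val
      exact hon.continuousAt (((hB.isClosed.union hC.isClosed).isOpen_compl).mem_nhds
        (by simp [hzB, hzC]))

/-- The swap homeomorphism. -/
noncomputable def swapHomeo {B C : Set X} (hB : IsClopen B) (hC : IsClopen C)
    (hd : Disjoint B C) (e : ↥B ≃ₜ ↥C) : X ≃ₜ X where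
  toEquiv := (swapFun_involutive hd e).toPerm _
  continuous_toFun := swapFun_continuous hB hC hd e
  continuous_invFun := swapFun_continuous hB hC hd e

end SwapHomeo

/-- **Rubin's condition.** If `X` is locally compact Hausdorff and
zero-dimensional with a base of pairwise homeomorphic compact clopen sets, then for every
open `U ⊆ X` and `x ∈ U`, the set of images of `x` under homeomorphisms of `X` fixing
`X \ U` pointwise is dense in `U`. -/
theorem dense_orbit_of_clopen_base (X : Type*) [TopologicalSpace X] [T2Space X]
    [LocallyCompactSpace X] (𝓑 : Set (Set X))
    (hbasis : TopologicalSpace.IsTopologicalBasis 𝓑)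
    (hcompact : ∀ B ∈ 𝓑, IsCompact B) (hclopen : ∀ B ∈ 𝓑, IsClopen B)
    (hhomeo : ∀ B ∈ 𝓑, ∀ C ∈ 𝓑, Nonempty (↥B ≃ₜ ↥C))
    (U : Set X) (hU : IsOpen U) (x : X) (hx : x ∈ U) :
    U ⊆ closure {y : X | ∃ g : X ≃ₜ X, (∀ z ∉ U, g z = z) ∧ g x = y} := by
  intro y hyU
  rw [mem_closure_iff]
  intro W hW hyW
  obtain ⟨B, hB, hyB, hBsub⟩ :=
    hbasis.exists_subset_of_mem_open (show y ∈ W ∩ U from ⟨hyW, hyU⟩) (hW.inter hU)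
  by_cases hxB : x ∈ B
  · exact ⟨x, (hBsub hxB).1, Homeomorph.refl X, fun z _ => rfl, rfl⟩
  · obtain ⟨C, hC, hxC, hCsub⟩ :=
      hbasis.exists_subset_of_mem_open (show x ∈ U \ B from ⟨hx, hxB⟩)
        (hU.sdiff (hclopen B hB).isClosed)
    have hd : Disjoint B C := Set.disjoint_left.mpr fun z hzB hzC => (hCsub hzC).2 hzB
    obtain ⟨e⟩ := hhomeo B hB C hC
    set g := swapHomeo (hclopen B hB) (hclopen C hC) hd e with hg
    have hgx : g x = (e.symm ⟨x, hxC⟩ : X) := by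
      show swapFun e x = _
      simp only [swapFun, dif_neg hxB, dif_pos hxC]
    refine ⟨g x, ?_, g, fun z hz => ?_, rfl⟩
    · rw [hgx]
      exact (hBsub (e.symm ⟨x, hxC⟩).2).1
    · show swapFun e z = z
      have hzB : z ∉ B := fun h => hz (hBsub h).2
      have hzC : z ∉ C := fun h => hz (hCsub h).1
      simp only [swapFun, dif_neg hzB, dif_neg hzC]
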